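/- Outer Pasch holds in planes over ordered fields: let K be a linearly ordered field and V a K-vector space. If Sbtw K a p c, Sbtw K b c q, and a, b, c are not collinear over K, then there exists x with Sbtw K b p x and Sbtw K a x q. -/

import Mathlib

/-- Outer Pasch holds in planes over ordered fields. -/
theorem outer_pasch {K : Type*} [Field K] [LinearOrder K] [IsStrictOrderedRing K] {V : Type*} [AddCommGroup V]
    [Module K V] {a b c p q : V}
    (hp : Sbtw K a p c) (hq : Sbtw K b c q)
    (hnc : ¬ Collinear K ({a, b, c} : Set V)) :
    ∃ x : V, Sbtw K b p x ∧ Sbtw K a x q := by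
  obtain ⟨t, ⟨ht0, ht1⟩, hpt⟩ := hp.mem_image_Ioo
  obtain ⟨s, ⟨hs0, hs1⟩, hcs⟩ := hq.mem_image_Ioo
  have hbq : b ≠ q := by
    rintro rfl
    exact hq.ne_left (by simpa using hcs.symm)
  set w : K := 1 - t + t * s with hw
  have hw0 : 0 < w := by nlinarith
  have hw1 : w < 1 := by nlinarith
  set u : K := t * s / w with hu
  have hu0 : 0 < u := div_pos (by positivity) hw0
  have hu1 : u < 1 := (div_lt_one hw0).2 (by nlinarith)
  refine ⟨AffineMap.lineMap a q u, ?_, ?_⟩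
  · have hbx : b ≠ AffineMap.lineMap a q u := by
      intro hb
      apply hnc
      have ha : a ∈ line[K, b, q] := by
        have : a = AffineMap.lineMap b q (u / (u - 1)) := by
          rw [hb]
          simp only [AffineMap.lineMap_apply_module]
          have h1 : u - 1 ≠ 0 := by linarith
          have h2 : (1:K) - t + t * s ≠ 0 := by nlinarith
          have h3 : t - 1 ≠ 0 := by linarith
          have h4 : -1 + t ≠ 0 := by intro h; apply h3; linarith
          have h5 : t * s - (1 - t + t * s) ≠ 0 := by intro h; apply h3; linarith
          match_scalars <;> (simp only [hu, hw]; field_simp; try ring)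
        rw [this]
        exact AffineMap.lineMap_mem_affineSpan_pair _ _ _
      have hbm : b ∈ line[K, b, q] := left_mem_affineSpan_pair _ _ _
      have hc : c ∈ line[K, b, q] := by
        rw [← hcs]; exact AffineMap.lineMap_mem_affineSpan_pair _ _ _
      exact collinear_triple_of_mem_affineSpan_pair ha hbm hc
    have hpx : p = AffineMap.lineMap b (AffineMap.lineMap a q u) w := by
      rw [← hpt, ← hcs]
      simp only [AffineMap.lineMap_apply_module, hu, hw]
      have h2 : (1:K) - t + t * s ≠ 0 := by nlinarith
      match_scalars <;> (field_simp; try ring)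
    rw [hpx]
    exact sbtw_lineMap_iff.2 ⟨hbx, hw0, hw1⟩
  · have haq : a ≠ q := by
      rintro rfl
      apply hnc
      have ha : a ∈ line[K, b, a] := right_mem_affineSpan_pair _ _ _
      have hbm : b ∈ line[K, b, a] := left_mem_affineSpan_pair _ _ _
      have hc : c ∈ line[K, b, a] := by
        rw [← hcs]; exact AffineMap.lineMap_mem_affineSpan_pair _ _ _
      exact collinear_triple_of_mem_affineSpan_pair ha hbm hc
    exact sbtw_lineMap_iff.2 ⟨haq, hu0, hu1⟩
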